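/- Let (m, d) = (2, 4) or (m, d) = (1, 6), set ζ := e^{2π√−1/d}, and let M be the 3×3 complex matrix with rows (−(m+1), −2m, −1), (1, 1, 0), (m, 2m, 1), regarded as a linear map on column vectors (c₀, c₁, c₂) ∈ ℂ³. Then the linear functional ψ(c₀, c₁, c₂) := (ζ − 1)·c₀ + (2mζ/(1 − ζ))·c₁ − c₂ satisfies ψ(M·v) = ζ·ψ(v) for all v ∈ ℂ³, and every linear functional ψ' : ℂ³ → ℂ with ψ' ∘ M = ζ·ψ' is a scalar multiple of ψ. -/

import Mathlib

/-- The Gepner central charge on a K3 surface: for `(m,d) = (2,4)` or `(1,6)` and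
`ζ = e^{2π√-1/d}`, the functional `ψ(c₀,c₁,c₂) = (ζ-1)c₀ + (2mζ/(1-ζ))c₁ - c₂` is,
up to scalar, the unique eigenvector with eigenvalue `ζ` for the dual action of the
matrix `M` of `ST_{O_X} ∘ (⊗ O_X(1))`. -/
theorem stmt_7 (m d : ℕ) (hmd : (m = 2 ∧ d = 4) ∨ (m = 1 ∧ d = 6))
    (ζ : ℂ) (hζ : ζ = Complex.exp (2 * Real.pi * Complex.I / d))
    (M : Matrix (Fin 3) (Fin 3) ℂ)
    (hM : M = !![-((m : ℂ) + 1), -(2 * (m : ℂ)), -1; 1, 1, 0; (m : ℂ), 2 * (m : ℂ), 1])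
    (ψ : (Fin 3 → ℂ) →ₗ[ℂ] ℂ)
    (hψ : ∀ v : Fin 3 → ℂ,
      ψ v = (ζ - 1) * v 0 + (2 * (m : ℂ) * ζ / (1 - ζ)) * v 1 - v 2) :
    (∀ v : Fin 3 → ℂ, ψ (M.mulVec v) = ζ * ψ v) ∧
    (∀ ψ' : (Fin 3 → ℂ) →ₗ[ℂ] ℂ, (∀ v, ψ' (M.mulVec v) = ζ * ψ' v) →
      ∃ c : ℂ, ψ' = c • ψ) := by
  have hm0 : (m : ℂ) ≠ 0 := by
    rcases hmd with ⟨hm, _⟩ | ⟨hm, _⟩ <;> subst hm <;> norm_num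
  have hc : (1 - ζ) * ((ζ - 1) * (ζ + (m : ℂ) + 1) + (m : ℂ)) = 2 * (m : ℂ) * ζ := by
    rcases hmd with ⟨hm, hd⟩ | ⟨hm, hd⟩ <;> subst hm <;> subst hd
    · have hzi : ζ = Complex.I := by
        rw [hζ]
        have : (2 * (Real.pi : ℂ) * Complex.I / (4 : ℕ)) = ((Real.pi / 2 : ℝ) : ℂ) * Complex.I := by
          push_cast; ring
        rw [this, Complex.exp_mul_I, ← Complex.ofReal_cos, ← Complex.ofReal_sin,
          Real.cos_pi_div_two, Real.sin_pi_div_two]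
        simp
      subst hzi
      push_cast
      linear_combination (-1 - Complex.I) * Complex.I_sq
    · have hzv : ζ = (1 / 2 : ℂ) + ((Real.sqrt 3 / 2 : ℝ) : ℂ) * Complex.I := by
        rw [hζ]
        have : (2 * (Real.pi : ℂ) * Complex.I / (6 : ℕ)) = ((Real.pi / 3 : ℝ) : ℂ) * Complex.I := by
          push_cast; ring
        rw [this, Complex.exp_mul_I, ← Complex.ofReal_cos, ← Complex.ofReal_sin,
          Real.cos_pi_div_three, Real.sin_pi_div_three]
        push_cast; ring
      have hs : ((Real.sqrt 3 : ℝ) : ℂ) ^ 2 = 3 := by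
        norm_cast
        rw [Real.sq_sqrt] <;> norm_num
      have hp : ζ ^ 2 = ζ - 1 := by
        rw [hzv]
        push_cast
        linear_combination (Complex.I ^ 2 / 4) * hs + (3 / 4) * Complex.I_sq
      push_cast
      linear_combination (-1 - ζ) * hp
  have hne : (1 : ℂ) - ζ ≠ 0 := by
    intro h
    have h1 : ζ = 1 := (sub_eq_zero.mp h).symm
    rw [h1] at hc
    simp at hc
    exact hm0 (by exact_mod_cast hc)
  constructor
  · intro v
    rw [hψ, hψ, hM]
    simp only [Matrix.mulVec, dotProduct, Fin.sum_univ_three,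
      Matrix.cons_val', Matrix.cons_val_zero, Matrix.cons_val_one, Matrix.head_cons,
      Matrix.empty_val', Matrix.cons_val_fin_one, Matrix.head_fin_const,
      Matrix.cons_val_two, Matrix.tail_cons, Matrix.of_apply]
    field_simp
    linear_combination (-(v 0)) * hc
  · intro ψ' h
    have key : ∀ (φ : (Fin 3 → ℂ) →ₗ[ℂ] ℂ) (v : Fin 3 → ℂ),
        φ v = v 0 * φ (fun j => if 0 = j then 1 else 0)
          + v 1 * φ (fun j => if 1 = j then 1 else 0)
          + v 2 * φ (fun j => if 2 = j then 1 else 0) := by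
      intro φ v
      rw [LinearMap.pi_apply_eq_sum_univ, Fin.sum_univ_three]
      simp [smul_eq_mul]
    set e0 : Fin 3 → ℂ := fun j => if 0 = j then 1 else 0 with he0
    set e1 : Fin 3 → ℂ := fun j => if 1 = j then 1 else 0 with he1
    set e2 : Fin 3 → ℂ := fun j => if 2 = j then 1 else 0 with he2
    have heq1 := h e1
    have heq2 := h e2
    rw [key ψ' (M.mulVec e1)] at heq1
    rw [key ψ' (M.mulVec e2)] at heq2
    have hMe1 : ∀ i, M.mulVec e1 i = M i 1 := by
      intro i
      simp [Matrix.mulVec, dotProduct, Fin.sum_univ_three, he1]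
    have hMe2 : ∀ i, M.mulVec e2 i = M i 2 := by
      intro i
      simp [Matrix.mulVec, dotProduct, Fin.sum_univ_three, he2]
    rw [hMe1 0, hMe1 1, hMe1 2] at heq1
    rw [hMe2 0, hMe2 1, hMe2 2] at heq2
    rw [hM] at heq1 heq2
    simp at heq1 heq2
    have hb0 : ψ' e0 = (1 - ζ) * ψ' e2 := by linear_combination -heq2
    have hb1 : ψ' e1 * (1 - ζ) = -(2 * (m : ℂ) * ζ * ψ' e2) := by
      linear_combination heq1 + 2 * (m : ℂ) * hb0
    refine ⟨-(ψ' e2), ?_⟩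
    apply LinearMap.ext
    intro v
    rw [key ψ' v, LinearMap.smul_apply, hψ, smul_eq_mul]
    field_simp
    linear_combination (v 0) * (1 - ζ) * hb0 + (v 1) * hb1
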